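/- For every natural number n ≥ 1, the integer sum ∑_{d ∣ n} μ(n/d)·2^d, taken over the positive divisors d of n, is at least 2^{n−1}. -/

import Mathlib

open ArithmeticFunction ArithmeticFunction.Moebius in
theorem moebius_sum_two_pow_ge (n : ℕ) (hn : 1 ≤ n) :
    (2 : ℤ) ^ (n - 1) ≤ ∑ d ∈ n.divisors, (μ (n / d) : ℤ) * (2 : ℤ) ^ d := by
  rcases lt_or_ge n 4 with h4 | h4
  · have h2 : Nat.divisors 2 = {1, 2} := by decide
    have h3 : Nat.divisors 3 = {1, 3} := by decide
    interval_cases n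
    · simp
    · rw [h2]
      rw [Finset.sum_insert (by decide), Finset.sum_singleton]
      norm_num [ArithmeticFunction.moebius_apply_prime Nat.prime_two]
    · rw [h3]
      rw [Finset.sum_insert (by decide), Finset.sum_singleton]
      norm_num [ArithmeticFunction.moebius_apply_prime Nat.prime_three]
  · have hn0 : n ≠ 0 := by omega
    have hmem : n ∈ n.divisors := Nat.mem_divisors_self n hn0
    rw [← Finset.add_sum_erase _ _ hmem]
    have h1 : (μ (n / n) : ℤ) * 2 ^ n = 2 ^ n := by
      rw [Nat.div_self (by omega)]; simp
    rw [h1]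
    have geom : ∀ m, ∑ i ∈ Finset.range m, (2 : ℤ) ^ i = 2 ^ m - 1 := by
      intro m
      induction m with
      | zero => simp
      | succ k ih => rw [Finset.sum_range_succ, ih]; ring
    have hsub : n.divisors.erase n ⊆ Finset.range (n / 2 + 1) := by
      intro d hd
      rw [Finset.mem_erase, Nat.mem_divisors] at hd
      obtain ⟨hne, hdvd, _⟩ := hd
      obtain ⟨k, hk⟩ := hdvd
      have hk2 : 2 ≤ k := by
        rcases Nat.lt_or_ge k 2 with hk1 | hk1
        · interval_cases k <;> omega
        · exact hk1
      have : d * 2 ≤ n := by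
        calc d * 2 ≤ d * k := Nat.mul_le_mul_left d hk2
          _ = n := hk.symm
      rw [Finset.mem_range]
      omega
    have hbound : |∑ d ∈ n.divisors.erase n, (μ (n / d) : ℤ) * 2 ^ d| ≤ 2 ^ (n / 2 + 1) - 1 := by
      calc |∑ d ∈ n.divisors.erase n, (μ (n / d) : ℤ) * 2 ^ d|
          ≤ ∑ d ∈ n.divisors.erase n, |(μ (n / d) : ℤ) * 2 ^ d| :=
            Finset.abs_sum_le_sum_abs _ _
        _ ≤ ∑ d ∈ n.divisors.erase n, (2 : ℤ) ^ d := by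
            apply Finset.sum_le_sum
            intro d _
            rw [abs_mul, abs_pow]
            calc |(μ (n / d) : ℤ)| * |(2 : ℤ)| ^ d ≤ 1 * |(2 : ℤ)| ^ d := by
                  apply mul_le_mul_of_nonneg_right ArithmeticFunction.abs_moebius_le_one
                  positivity
              _ = (2 : ℤ) ^ d := by norm_num
        _ ≤ ∑ d ∈ Finset.range (n / 2 + 1), (2 : ℤ) ^ d := by
            apply Finset.sum_le_sum_of_subset_of_nonneg hsub
            intro i _ _
            positivity
        _ = 2 ^ (n / 2 + 1) - 1 := geom _
    have hle : (2 : ℤ) ^ (n / 2 + 1) ≤ 2 ^ (n - 1) := by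
      apply pow_le_pow_right₀ (by norm_num)
      omega
    have hpow : (2 : ℤ) ^ n = 2 ^ (n - 1) * 2 := by
      rw [← pow_succ]
      congr 1
      omega
    have habs := abs_le.mp hbound
    have : -(2 ^ (n - 1) - 1) ≤ ∑ d ∈ n.divisors.erase n, (μ (n / d) : ℤ) * 2 ^ d := by
      linarith [habs.1]
    linarith [this]
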